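/- For m = 5k with k ≥ 1, in H = K_{m,m} \ E(C_{2m}) with parts {x_1,...,x_m}, {y_1,...,y_m} and C_{2m} = x_1 y_1 x_2 y_2 ... x_m y_m x_1, the set W = {y_{5j+1}, y_{5j+2}, x_{5j+4}, x_{5j+5} : 0 ≤ j ≤ k-1} is a resolving set of H of cardinality 4k. -/

import Mathlib

/-- `W` resolves `G`: every vertex is determined by its distance vector to `W`. -/
def Resolves {V : Type*} (G : SimpleGraph V) (W : Set V) : Prop :=
  ∀ u v : V, (∀ w ∈ W, G.dist u w = G.dist v w) → u = v

/-- Metric dimension: minimum cardinality of a (finite) resolving set. -/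
noncomputable def metricDim {V : Type*} (G : SimpleGraph V) : ℕ :=
  sInf {k | ∃ W : Set V, W.Finite ∧ W.ncard = k ∧ Resolves G W}
/-- `K_{m,m}` minus the Hamiltonian cycle `x₁ y₁ x₂ y₂ … x_m y_m x₁` (0-indexed:
cycle edges are `xᵢ yᵢ` and `yᵢ x_{i+1 mod m}`). -/
def cycGraph (m : ℕ) : SimpleGraph (Fin m ⊕ Fin m) where
  Adj u v := match u, v with
    | Sum.inl i, Sum.inr j => j ≠ i ∧ (i : ℕ) ≠ ((j : ℕ) + 1) % m
    | Sum.inr j, Sum.inl i => j ≠ i ∧ (i : ℕ) ≠ ((j : ℕ) + 1) % m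
    | _, _ => False
  symm := ⟨by rintro (i|i) (j|j) h <;> exact h⟩
  loopless := ⟨by rintro (i|i) h <;> exact h⟩

/-- Position `k` (taken mod `2m`) along the Hamiltonian cycle
`x₁ y₁ x₂ y₂ …`: even positions `2i ↦ xᵢ`, odd positions `2i+1 ↦ yᵢ`. -/
def cyc (m : ℕ) [NeZero m] (k : ℕ) : Fin m ⊕ Fin m :=
  if (k % (2 * m)) % 2 = 0 then
    Sum.inl ⟨k % (2 * m) / 2, by
      have hm : 0 < m := Nat.pos_of_ne_zero (NeZero.ne m)
      have h : k % (2 * m) < 2 * m := Nat.mod_lt _ (by omega)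
      exact Nat.div_lt_of_lt_mul (by omega)⟩
  else
    Sum.inr ⟨k % (2 * m) / 2, by
      have hm : 0 < m := Nat.pos_of_ne_zero (NeZero.ne m)
      have h : k % (2 * m) < 2 * m := Nat.mod_lt _ (by omega)
      exact Nat.div_lt_of_lt_mul (by omega)⟩

/-- `W` has a gap of exactly `L` vertices starting at cycle position `s`:
the positions `s` and `s+L+1` are in `W` and the `L` positions strictly between are not. -/
def IsGap (m : ℕ) [NeZero m] (W : Set (Fin m ⊕ Fin m)) (s L : ℕ) : Prop :=
  cyc m s ∈ W ∧ cyc m (s + L + 1) ∈ W ∧ ∀ t, 1 ≤ t → t ≤ L → cyc m (s + t) ∉ W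

/-! ### Auxiliary lemmas -/

lemma cyc_even (m : ℕ) [NeZero m] (a : ℕ) (h : a < m) : cyc m (2*a) = Sum.inl ⟨a, h⟩ := by
  have h1 : 2*a % (2*m) = 2*a := Nat.mod_eq_of_lt (by omega)
  simp only [cyc, h1]
  rw [if_pos (by omega)]
  simp only [Sum.inl.injEq, Fin.mk.injEq]
  omega

lemma cyc_odd (m : ℕ) [NeZero m] (a : ℕ) (h : a < m) : cyc m (2*a+1) = Sum.inr ⟨a, h⟩ := by
  have h1 : (2*a+1) % (2*m) = 2*a+1 := Nat.mod_eq_of_lt (by omega)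
  simp only [cyc, h1]
  rw [if_neg (by omega)]
  simp only [Sum.inr.injEq, Fin.mk.injEq]
  omega

lemma cycW1 (m k : ℕ) [NeZero m] (hm : m = 5*k) (j : ℕ) (hj : j < k) :
    cyc m (10*j+1) = Sum.inr ⟨5*j, by omega⟩ := by
  rw [show 10*j+1 = 2*(5*j)+1 by ring, cyc_odd m (5*j) (by omega)]

lemma cycW2 (m k : ℕ) [NeZero m] (hm : m = 5*k) (j : ℕ) (hj : j < k) :
    cyc m (10*j+3) = Sum.inr ⟨5*j+1, by omega⟩ := by
  rw [show 10*j+3 = 2*(5*j+1)+1 by ring, cyc_odd m (5*j+1) (by omega)]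

lemma cycW3 (m k : ℕ) [NeZero m] (hm : m = 5*k) (j : ℕ) (hj : j < k) :
    cyc m (10*j+6) = Sum.inl ⟨5*j+3, by omega⟩ := by
  rw [show 10*j+6 = 2*(5*j+3) by ring, cyc_even m (5*j+3) (by omega)]

lemma cycW4 (m k : ℕ) [NeZero m] (hm : m = 5*k) (j : ℕ) (hj : j < k) :
    cyc m (10*j+8) = Sum.inl ⟨5*j+4, by omega⟩ := by
  rw [show 10*j+8 = 2*(5*j+4) by ring, cyc_even m (5*j+4) (by omega)]

lemma memW_inl (m k : ℕ) [NeZero m] (hm : m = 5 * k) (i : Fin m) :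
    (Sum.inl i ∈ {v : Fin m ⊕ Fin m | ∃ j < k, v = cyc m (10 * j + 1) ∨ v = cyc m (10 * j + 3) ∨
        v = cyc m (10 * j + 6) ∨ v = cyc m (10 * j + 8)}) ↔
    ((i:ℕ) % 5 = 3 ∨ (i:ℕ) % 5 = 4) := by
  constructor
  · rintro ⟨j, hj, h | h | h | h⟩
    · rw [cycW1 m k hm j hj] at h; exact absurd h (by simp)
    · rw [cycW2 m k hm j hj] at h; exact absurd h (by simp)
    · rw [cycW3 m k hm j hj] at h
      simp only [Sum.inl.injEq, Fin.ext_iff] at h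
      left; omega
    · rw [cycW4 m k hm j hj] at h
      simp only [Sum.inl.injEq, Fin.ext_iff] at h
      right; omega
  · rintro (h | h)
    · refine ⟨(i:ℕ)/5, by omega, Or.inr (Or.inr (Or.inl ?_))⟩
      rw [cycW3 m k hm _ (by omega)]
      simp only [Sum.inl.injEq, Fin.ext_iff]
      omega
    · refine ⟨(i:ℕ)/5, by omega, Or.inr (Or.inr (Or.inr ?_))⟩
      rw [cycW4 m k hm _ (by omega)]
      simp only [Sum.inl.injEq, Fin.ext_iff]
      omega

lemma memW_inr (m k : ℕ) [NeZero m] (hm : m = 5 * k) (i : Fin m) :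
    (Sum.inr i ∈ {v : Fin m ⊕ Fin m | ∃ j < k, v = cyc m (10 * j + 1) ∨ v = cyc m (10 * j + 3) ∨
        v = cyc m (10 * j + 6) ∨ v = cyc m (10 * j + 8)}) ↔
    ((i:ℕ) % 5 = 0 ∨ (i:ℕ) % 5 = 1) := by
  constructor
  · rintro ⟨j, hj, h | h | h | h⟩
    · rw [cycW1 m k hm j hj] at h
      simp only [Sum.inr.injEq, Fin.ext_iff] at h
      left; omega
    · rw [cycW2 m k hm j hj] at h
      simp only [Sum.inr.injEq, Fin.ext_iff] at h
      right; omega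
    · rw [cycW3 m k hm j hj] at h; exact absurd h (by simp)
    · rw [cycW4 m k hm j hj] at h; exact absurd h (by simp)
  · rintro (h | h)
    · refine ⟨(i:ℕ)/5, by omega, Or.inl ?_⟩
      rw [cycW1 m k hm _ (by omega)]
      simp only [Sum.inr.injEq, Fin.ext_iff]
      omega
    · refine ⟨(i:ℕ)/5, by omega, Or.inr (Or.inl ?_)⟩
      rw [cycW2 m k hm _ (by omega)]
      simp only [Sum.inr.injEq, Fin.ext_iff]
      omega

lemma avoid4 (m p q r s : ℕ) (hm : 5 ≤ m) : ∃ a < m, a ≠ p ∧ a ≠ q ∧ a ≠ r ∧ a ≠ s := by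
  by_cases h0 : 0 = p ∨ 0 = q ∨ 0 = r ∨ 0 = s
  · by_cases h1 : 1 = p ∨ 1 = q ∨ 1 = r ∨ 1 = s
    · by_cases h2 : 2 = p ∨ 2 = q ∨ 2 = r ∨ 2 = s
      · by_cases h3 : 3 = p ∨ 3 = q ∨ 3 = r ∨ 3 = s
        · exact ⟨4, by omega, by omega, by omega, by omega, by omega⟩
        · exact ⟨3, by omega, by omega, by omega, by omega, by omega⟩
      · exact ⟨2, by omega, by omega, by omega, by omega, by omega⟩
    · exact ⟨1, by omega, by omega, by omega, by omega, by omega⟩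
  · exact ⟨0, by omega, by omega, by omega, by omega, by omega⟩

lemma adj_lr {m : ℕ} (i j : Fin m) :
    (cycGraph m).Adj (Sum.inl i) (Sum.inr j) ↔ ((j:ℕ) ≠ (i:ℕ) ∧ (i : ℕ) ≠ ((j : ℕ) + 1) % m) := by
  constructor
  · rintro ⟨h1, h2⟩; exact ⟨fun h => h1 (Fin.ext h), h2⟩
  · rintro ⟨h1, h2⟩; exact ⟨fun h => h1 (congrArg Fin.val h), h2⟩

lemma adj_rl {m : ℕ} (i j : Fin m) :
    (cycGraph m).Adj (Sum.inr j) (Sum.inl i) ↔ ((j:ℕ) ≠ (i:ℕ) ∧ (i : ℕ) ≠ ((j : ℕ) + 1) % m) := by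
  constructor
  · rintro ⟨h1, h2⟩; exact ⟨fun h => h1 (Fin.ext h), h2⟩
  · rintro ⟨h1, h2⟩; exact ⟨fun h => h1 (congrArg Fin.val h), h2⟩

def sideN {m : ℕ} : Fin m ⊕ Fin m → ℕ := Sum.elim (fun _ => 0) (fun _ => 1)

lemma adj_side {m : ℕ} {u v} (h : (cycGraph m).Adj u v) : sideN u + sideN v = 1 := by
  rcases u with i | i <;> rcases v with j | j
  · exact h.elim
  · rfl
  · rfl
  · exact h.elim

lemma walk_parity {m : ℕ} {u v} (p : (cycGraph m).Walk u v) :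
    (p.length + sideN u + sideN v) % 2 = 0 := by
  induction p with
  | nil =>
    rename_i w
    rcases w with i | i <;> simp [sideN]
  | cons h p ih =>
    have := adj_side h
    rw [SimpleGraph.Walk.length_cons]
    omega

lemma modm_char (m l : ℕ) (hl : l < m) :
    ((l+1) % m = l+1 ∧ l+1 < m) ∨ ((l+1) % m = 0 ∧ l+1 = m) := by
  rcases Nat.lt_or_ge (l+1) m with h | h
  · exact Or.inl ⟨Nat.mod_eq_of_lt h, h⟩
  · exact Or.inr ⟨by rw [show l+1 = m by omega, Nat.mod_self], by omega⟩

lemma commonA (m i j : ℕ) (hm : 5 ≤ m) (hi : i < m) (hj : j < m) :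
    ∃ a < m, a ≠ i ∧ i ≠ (a+1) % m ∧ a ≠ j ∧ j ≠ (a+1) % m := by
  obtain ⟨a, ha, h1, h3, h2, h4⟩ :=
    avoid4 m i j (if i = 0 then m-1 else i-1) (if j = 0 then m-1 else j-1) hm
  refine ⟨a, ha, h1, ?_, h3, ?_⟩ <;>
    rcases modm_char m a ha with ⟨e, h⟩ | ⟨e, h⟩ <;> rw [e] <;> split_ifs at h2 h4 <;> omega

lemma reach_ll {m : ℕ} (hm5 : 5 ≤ m) (i j : Fin m) :
    (cycGraph m).Reachable (Sum.inl i) (Sum.inl j) := by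
  obtain ⟨a, ha, h1, h2, h3, h4⟩ := commonA m i j hm5 i.2 j.2
  have e1 : (cycGraph m).Adj (Sum.inl i) (Sum.inr ⟨a, ha⟩) := (adj_lr i ⟨a, ha⟩).2 ⟨h1, h2⟩
  have e2 : (cycGraph m).Adj (Sum.inr ⟨a, ha⟩) (Sum.inl j) := (adj_rl j ⟨a, ha⟩).2 ⟨h3, h4⟩
  exact e1.reachable.trans e2.reachable

lemma reach_lr {m : ℕ} (hm5 : 5 ≤ m) (i j : Fin m) :
    (cycGraph m).Reachable (Sum.inl i) (Sum.inr j) := by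
  obtain ⟨b, hb, h1, h2, _, _⟩ := avoid4 m j ((j+1) % m) 0 0 hm5
  have e1 : (cycGraph m).Adj (Sum.inl ⟨b, hb⟩) (Sum.inr j) := (adj_lr ⟨b, hb⟩ j).2 ⟨Ne.symm h1, h2⟩
  exact (reach_ll hm5 i ⟨b, hb⟩).trans e1.reachable

lemma preconn {m : ℕ} (hm5 : 5 ≤ m) : (cycGraph m).Preconnected := by
  rintro (i | i) (j | j)
  · exact reach_ll hm5 i j
  · exact reach_lr hm5 i j
  · exact (reach_lr hm5 j i).symm
  · exact ((reach_lr hm5 i i).symm).trans (reach_lr hm5 i j)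

lemma dist_parity {m : ℕ} (hm5 : 5 ≤ m) (u v : Fin m ⊕ Fin m) :
    ((cycGraph m).dist u v + sideN u + sideN v) % 2 = 0 := by
  obtain ⟨p, hp⟩ := (preconn hm5 u v).exists_walk_length_eq_dist
  rw [← hp]
  exact walk_parity p

lemma keyX (m k i j : ℕ) (hm : m = 5*k) (hi : i < m) (hj : j < m)
    (hij : i ≠ j) (hi5 : i % 5 < 3) (hj5 : j % 5 < 3) :
    ∃ l < m, (l % 5 = 0 ∨ l % 5 = 1) ∧
      ((l = i ∨ i = (l+1) % m) ↔ (l ≠ j ∧ j ≠ (l+1) % m)) := by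
  have h5i : i % 5 = 0 ∨ i % 5 = 1 ∨ i % 5 = 2 := by omega
  have h5j : j % 5 = 0 ∨ j % 5 = 1 ∨ j % 5 = 2 := by omega
  rcases h5i with hi0 | hi1 | hi2 <;> rcases h5j with hj0 | hj1 | hj2
  · exact ⟨i, by omega, by omega, by rcases modm_char m i hi with ⟨e,h⟩|⟨e,h⟩ <;> rw [e] <;> omega⟩
  · exact ⟨j, by omega, by omega, by rcases modm_char m j hj with ⟨e,h⟩|⟨e,h⟩ <;> rw [e] <;> omega⟩
  · exact ⟨i, by omega, by omega, by rcases modm_char m i hi with ⟨e,h⟩|⟨e,h⟩ <;> rw [e] <;> omega⟩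
  · exact ⟨i, by omega, by omega, by rcases modm_char m i hi with ⟨e,h⟩|⟨e,h⟩ <;> rw [e] <;> omega⟩
  · exact ⟨i, by omega, by omega, by rcases modm_char m i hi with ⟨e,h⟩|⟨e,h⟩ <;> rw [e] <;> omega⟩
  · exact ⟨i-1, by omega, by omega, by rcases modm_char m (i-1) (by omega) with ⟨e,h⟩|⟨e,h⟩ <;> rw [e] <;> omega⟩
  · exact ⟨j, by omega, by omega, by rcases modm_char m j hj with ⟨e,h⟩|⟨e,h⟩ <;> rw [e] <;> omega⟩
  · exact ⟨j-1, by omega, by omega, by rcases modm_char m (j-1) (by omega) with ⟨e,h⟩|⟨e,h⟩ <;> rw [e] <;> omega⟩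
  · exact ⟨i-1, by omega, by omega, by rcases modm_char m (i-1) (by omega) with ⟨e,h⟩|⟨e,h⟩ <;> rw [e] <;> omega⟩

lemma keyY (m k a b : ℕ) (hm : m = 5*k) (hi : a < m) (hj : b < m)
    (hij : a ≠ b) (hi5 : 2 ≤ a % 5) (hj5 : 2 ≤ b % 5) :
    ∃ l < m, (l % 5 = 3 ∨ l % 5 = 4) ∧
      ((a = l ∨ l = (a+1) % m) ↔ (b ≠ l ∧ l ≠ (b+1) % m)) := by
  have h5a : a % 5 = 2 ∨ a % 5 = 3 ∨ a % 5 = 4 := by omega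
  have h5b : b % 5 = 2 ∨ b % 5 = 3 ∨ b % 5 = 4 := by omega
  have ea := modm_char m a hi
  have eb := modm_char m b hj
  rcases h5a with h1 | h1 | h1 <;> rcases h5b with h2 | h2 | h2
  · exact ⟨a+1, by omega, by omega, by rcases ea with ⟨e,h⟩|⟨e,h⟩ <;> rcases eb with ⟨e',h'⟩|⟨e',h'⟩ <;> rw [e, e'] <;> omega⟩
  · exact ⟨b+1, by omega, by omega, by rcases ea with ⟨e,h⟩|⟨e,h⟩ <;> rcases eb with ⟨e',h'⟩|⟨e',h'⟩ <;> rw [e, e'] <;> omega⟩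
  · exact ⟨b, by omega, by omega, by rcases ea with ⟨e,h⟩|⟨e,h⟩ <;> rcases eb with ⟨e',h'⟩|⟨e',h'⟩ <;> rw [e, e'] <;> omega⟩
  · exact ⟨a+1, by omega, by omega, by rcases ea with ⟨e,h⟩|⟨e,h⟩ <;> rcases eb with ⟨e',h'⟩|⟨e',h'⟩ <;> rw [e, e'] <;> omega⟩
  · exact ⟨a, by omega, by omega, by rcases ea with ⟨e,h⟩|⟨e,h⟩ <;> rcases eb with ⟨e',h'⟩|⟨e',h'⟩ <;> rw [e, e'] <;> omega⟩
  · exact ⟨a, by omega, by omega, by rcases ea with ⟨e,h⟩|⟨e,h⟩ <;> rcases eb with ⟨e',h'⟩|⟨e',h'⟩ <;> rw [e, e'] <;> omega⟩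
  · exact ⟨a, by omega, by omega, by rcases ea with ⟨e,h⟩|⟨e,h⟩ <;> rcases eb with ⟨e',h'⟩|⟨e',h'⟩ <;> rw [e, e'] <;> omega⟩
  · exact ⟨b, by omega, by omega, by rcases ea with ⟨e,h⟩|⟨e,h⟩ <;> rcases eb with ⟨e',h'⟩|⟨e',h'⟩ <;> rw [e, e'] <;> omega⟩
  · exact ⟨a, by omega, by omega, by rcases ea with ⟨e,h⟩|⟨e,h⟩ <;> rcases eb with ⟨e',h'⟩|⟨e',h'⟩ <;> rw [e, e'] <;> omega⟩

/-- for `m = 5k`, `k ≥ 1`, the set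
`W = {y_{5j+1}, y_{5j+2}, x_{5j+4}, x_{5j+5} : 0 ≤ j ≤ k-1}` (written via cycle
positions: `y_{5j+1}` is position `10j+1`, `y_{5j+2}` is `10j+3`,
`x_{5j+4}` is `10j+6`, `x_{5j+5}` is `10j+8`) is a resolving set of
`K_{m,m} \ E(C_{2m})` of cardinality `4k`. -/
theorem stmt6 (m k : ℕ) [NeZero m] (hk : 1 ≤ k) (hm : m = 5 * k) :
    Resolves (cycGraph m)
      {v | ∃ j < k, v = cyc m (10 * j + 1) ∨ v = cyc m (10 * j + 3) ∨
        v = cyc m (10 * j + 6) ∨ v = cyc m (10 * j + 8)} ∧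
    ({v | ∃ j < k, v = cyc m (10 * j + 1) ∨ v = cyc m (10 * j + 3) ∨
        v = cyc m (10 * j + 6) ∨ v = cyc m (10 * j + 8)} :
      Set (Fin m ⊕ Fin m)).ncard = 4 * k := by
  have hm5 : 5 ≤ m := by omega
  set W : Set (Fin m ⊕ Fin m) :=
    {v | ∃ j < k, v = cyc m (10 * j + 1) ∨ v = cyc m (10 * j + 3) ∨
        v = cyc m (10 * j + 6) ∨ v = cyc m (10 * j + 8)} with hWdef
  constructor
  · -- Resolving
    intro u v h
    rcases u with i | i <;> rcases v with j | j
    · -- inl, inl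
      by_cases hij : i = j
      · rw [hij]
      by_cases hu : (i:ℕ) % 5 = 3 ∨ (i:ℕ) % 5 = 4
      · have hw : Sum.inl i ∈ W := (memW_inl m k hm i).2 hu
        have h0 := h _ hw
        rw [SimpleGraph.dist_self] at h0
        exact (((preconn hm5 (Sum.inl j) (Sum.inl i)).dist_eq_zero_iff).1 h0.symm).symm
      by_cases hv : (j:ℕ) % 5 = 3 ∨ (j:ℕ) % 5 = 4
      · have hw : Sum.inl j ∈ W := (memW_inl m k hm j).2 hv
        have h0 := h _ hw
        rw [SimpleGraph.dist_self] at h0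
        exact (((preconn hm5 (Sum.inl i) (Sum.inl j)).dist_eq_zero_iff)).1 h0
      · exfalso
        obtain ⟨l, hl, hres, hiff⟩ := keyX m k i j hm i.2 j.2
          (fun hh => hij (Fin.ext hh)) (by omega) (by omega)
        have hw : Sum.inr ⟨l, hl⟩ ∈ W := (memW_inr m k hm ⟨l, hl⟩).2 hres
        have hd := h _ hw
        by_cases hadj : (l = (i:ℕ) ∨ (i:ℕ) = (l+1) % m)
        · have hav : (cycGraph m).Adj (Sum.inl j) (Sum.inr ⟨l, hl⟩) :=
            (adj_lr j ⟨l, hl⟩).2 (hiff.1 hadj)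
          have h1 : (cycGraph m).dist (Sum.inl j) (Sum.inr ⟨l, hl⟩) = 1 :=
            SimpleGraph.dist_eq_one_iff_adj.2 hav
          rw [h1] at hd
          have hau := (adj_lr i ⟨l, hl⟩).1 (SimpleGraph.dist_eq_one_iff_adj.1 hd)
          rcases hadj with h' | h'
          · exact hau.1 h'
          · exact hau.2 h'
        · have hau : (cycGraph m).Adj (Sum.inl i) (Sum.inr ⟨l, hl⟩) :=
            (adj_lr i ⟨l, hl⟩).2 ⟨fun h' => hadj (Or.inl h'), fun h' => hadj (Or.inr h')⟩
          have h1 : (cycGraph m).dist (Sum.inl i) (Sum.inr ⟨l, hl⟩) = 1 :=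
            SimpleGraph.dist_eq_one_iff_adj.2 hau
          rw [h1] at hd
          have hav := (adj_lr j ⟨l, hl⟩).1 (SimpleGraph.dist_eq_one_iff_adj.1 hd.symm)
          exact hadj (hiff.2 hav)
    · -- inl, inr : parity contradiction
      exfalso
      have hw : Sum.inr ⟨0, by omega⟩ ∈ W :=
        (memW_inr m k hm ⟨0, by omega⟩).2 (Or.inl rfl)
      have hd := h _ hw
      have p1 := dist_parity hm5 (Sum.inl i) (Sum.inr (⟨0, by omega⟩ : Fin m))
      have p2 := dist_parity hm5 (Sum.inr j) (Sum.inr (⟨0, by omega⟩ : Fin m))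
      simp only [sideN, Sum.elim_inl, Sum.elim_inr] at p1 p2
      omega
    · -- inr, inl : parity contradiction
      exfalso
      have hw : Sum.inr ⟨0, by omega⟩ ∈ W :=
        (memW_inr m k hm ⟨0, by omega⟩).2 (Or.inl rfl)
      have hd := h _ hw
      have p1 := dist_parity hm5 (Sum.inr i) (Sum.inr (⟨0, by omega⟩ : Fin m))
      have p2 := dist_parity hm5 (Sum.inl j) (Sum.inr (⟨0, by omega⟩ : Fin m))
      simp only [sideN, Sum.elim_inl, Sum.elim_inr] at p1 p2
      omega
    · -- inr, inr
      by_cases hij : i = j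
      · rw [hij]
      by_cases hu : (i:ℕ) % 5 = 0 ∨ (i:ℕ) % 5 = 1
      · have hw : Sum.inr i ∈ W := (memW_inr m k hm i).2 hu
        have h0 := h _ hw
        rw [SimpleGraph.dist_self] at h0
        exact (((preconn hm5 (Sum.inr j) (Sum.inr i)).dist_eq_zero_iff).1 h0.symm).symm
      by_cases hv : (j:ℕ) % 5 = 0 ∨ (j:ℕ) % 5 = 1
      · have hw : Sum.inr j ∈ W := (memW_inr m k hm j).2 hv
        have h0 := h _ hw
        rw [SimpleGraph.dist_self] at h0
        exact (((preconn hm5 (Sum.inr i) (Sum.inr j)).dist_eq_zero_iff)).1 h0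
      · exfalso
        obtain ⟨l, hl, hres, hiff⟩ := keyY m k i j hm i.2 j.2
          (fun hh => hij (Fin.ext hh)) (by omega) (by omega)
        have hw : Sum.inl ⟨l, hl⟩ ∈ W := (memW_inl m k hm ⟨l, hl⟩).2 hres
        have hd := h _ hw
        by_cases hadj : ((i:ℕ) = l ∨ l = ((i:ℕ)+1) % m)
        · have hav : (cycGraph m).Adj (Sum.inr j) (Sum.inl ⟨l, hl⟩) :=
            (adj_rl ⟨l, hl⟩ j).2 (hiff.1 hadj)
          have h1 : (cycGraph m).dist (Sum.inr j) (Sum.inl ⟨l, hl⟩) = 1 :=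
            SimpleGraph.dist_eq_one_iff_adj.2 hav
          rw [h1] at hd
          have hau := (adj_rl ⟨l, hl⟩ i).1 (SimpleGraph.dist_eq_one_iff_adj.1 hd)
          rcases hadj with h' | h'
          · exact hau.1 h'
          · exact hau.2 h'
        · have hau : (cycGraph m).Adj (Sum.inr i) (Sum.inl ⟨l, hl⟩) :=
            (adj_rl ⟨l, hl⟩ i).2 ⟨fun h' => hadj (Or.inl h'), fun h' => hadj (Or.inr h')⟩
          have h1 : (cycGraph m).dist (Sum.inr i) (Sum.inl ⟨l, hl⟩) = 1 :=
            SimpleGraph.dist_eq_one_iff_adj.2 hau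
          rw [h1] at hd
          have hav := (adj_rl ⟨l, hl⟩ j).1 (SimpleGraph.dist_eq_one_iff_adj.1 hd.symm)
          exact hadj (hiff.2 hav)
  · -- Cardinality
    classical
    set F : Finset (Fin m ⊕ Fin m) := (Finset.range k).biUnion
      (fun j => {cyc m (10*j+1), cyc m (10*j+3), cyc m (10*j+6), cyc m (10*j+8)}) with hF
    have hWF : W = ↑F := by
      ext v
      simp only [hWdef, Set.mem_setOf_eq, hF, Finset.coe_biUnion, Finset.coe_insert,
        Finset.mem_coe, Finset.mem_range, Set.mem_iUnion, Set.mem_insert_iff,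
        Finset.coe_singleton, Set.mem_singleton_iff]
      constructor
      · rintro ⟨j, hj, hcase⟩; exact ⟨j, hj, hcase⟩
      · rintro ⟨j, hj, hcase⟩; exact ⟨j, hj, hcase⟩
    rw [hWF, Set.ncard_coe_finset]
    have hdisj : ∀ x ∈ Finset.range k, ∀ y ∈ Finset.range k, x ≠ y →
        Disjoint ({cyc m (10*x+1), cyc m (10*x+3), cyc m (10*x+6), cyc m (10*x+8)} :
          Finset (Fin m ⊕ Fin m))
          {cyc m (10*y+1), cyc m (10*y+3), cyc m (10*y+6), cyc m (10*y+8)} := by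
      intro x hx y hy hxy
      rw [Finset.mem_range] at hx hy
      rw [Finset.disjoint_left]
      intro a hax hay
      rw [cycW1 m k hm x hx, cycW2 m k hm x hx, cycW3 m k hm x hx, cycW4 m k hm x hx] at hax
      rw [cycW1 m k hm y hy, cycW2 m k hm y hy, cycW3 m k hm y hy, cycW4 m k hm y hy] at hay
      simp only [Finset.mem_insert, Finset.mem_singleton] at hax hay
      rcases hax with rfl | rfl | rfl | rfl <;>
        simp only [Sum.inr.injEq, Sum.inl.injEq, Fin.ext_iff, Fin.mk.injEq, reduceCtorEq, false_or,
          or_false] at hay <;> omega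
    rw [hF, Finset.card_biUnion hdisj]
    have hcard4 : ∀ j ∈ Finset.range k,
        ({cyc m (10*j+1), cyc m (10*j+3), cyc m (10*j+6), cyc m (10*j+8)} :
          Finset (Fin m ⊕ Fin m)).card = 4 := by
      intro j hj
      rw [Finset.mem_range] at hj
      rw [cycW1 m k hm j hj, cycW2 m k hm j hj, cycW3 m k hm j hj, cycW4 m k hm j hj]
      rw [Finset.card_insert_of_notMem (by
            simp only [Finset.mem_insert, Finset.mem_singleton, Sum.inr.injEq, Sum.inl.injEq,
              Fin.ext_iff, Fin.mk.injEq, reduceCtorEq, or_false, false_or]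
            omega),
          Finset.card_insert_of_notMem (by simp),
          Finset.card_insert_of_notMem (by
            simp only [Finset.mem_singleton, Sum.inl.injEq, Fin.mk.injEq]
            omega),
          Finset.card_singleton]
    rw [Finset.sum_congr rfl hcard4, Finset.sum_const, Finset.card_range, smul_eq_mul, mul_comm]
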